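/- arXiv:2103.05781 — 2 statements merged into one kernel-verified Lean document; each statement's English description precedes it below -/
import Mathlib

section
/- The number of spanning trees of the complete graph on p ≥ 1 labeled vertices is p^{p-2}. -/
set_option linter.unusedSectionVars false
set_option maxHeartbeats 1000000

open Function Finset SimpleGraph

/-- `T` is a spanning tree of `G`. -/
def IsSpanningTree {V : Type*} {G : SimpleGraph V} (T : G.Subgraph) : Prop :=
  T.IsSpanning ∧ T.spanningCoe.IsTree

namespace Cayley


noncomputable def hgt {α : Type*} (f : α → α) (r v : α) : ℕ := sInf {k | f^[k] v = r}

lemma hgt_spec {α : Type*} {f : α → α} {r v : α} (h : ∃ k, f^[k] v = r) :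
    f^[hgt f r v] v = r := Nat.sInf_mem h

lemma hgt_pos {α : Type*} {f : α → α} {r v : α} (h : ∃ k, f^[k] v = r) (hv : v ≠ r) :
    1 ≤ hgt f r v := by
  rcases Nat.eq_zero_or_pos (hgt f r v) with h0 | h0
  · have := hgt_spec h; rw [h0] at this; exact absurd this hv
  · exact h0

lemma hgt_lt {α : Type*} {f : α → α} {r v : α} (h : ∃ k, f^[k] v = r) (hv : v ≠ r) :
    hgt f r (f v) < hgt f r v := by
  have h1 : 1 ≤ hgt f r v := hgt_pos h hv
  have h2 : f^[hgt f r v - 1] (f v) = r := by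
    rw [← Function.iterate_succ_apply, Nat.succ_eq_add_one, Nat.sub_add_cancel h1]
    exact hgt_spec h
  have h3 := Nat.sInf_le (show hgt f r v - 1 ∈ {k | f^[k] (f v) = r} from h2)
  calc hgt f r (f v) ≤ hgt f r v - 1 := h3
    _ < hgt f r v := by omega

lemma hgt_self {α : Type*} (f : α → α) (r : α) : hgt f r r = 0 :=
  Nat.sInf_eq_zero.mpr (Or.inl rfl)

variable {V : Type*} [Fintype V] [DecidableEq V] {z : V}

/-- `f` is the parent function of a tree on `V` rooted at `z`. -/
def IsParent (z : V) (f : V → V) : Prop := f z = z ∧ ∀ v, ∃ k, f^[k] v = z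

namespace IsParent

variable {f : V → V} (hf : IsParent z f)
include hf

lemma no_fix {v : V} (hv : v ≠ z) : f v ≠ v := by
  intro h
  obtain ⟨k, hk⟩ := hf.2 v
  have : ∀ k, f^[k] v = v := by
    intro k; induction k with
    | zero => rfl
    | succ n ih => rw [Function.iterate_succ_apply', ih, h]
  rw [this k] at hk; exact hv hk

lemma no_two_cycle {v : V} (hv : v ≠ z) (h2 : f (f v) = v) : False := by
  have hfvz : f v ≠ z := by
    intro h
    rw [h, hf.1] at h2
    exact hv h2.symm
  have horb : ∀ k, f^[k] v = v ∨ f^[k] v = f v := by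
    intro k; induction k with
    | zero => exact Or.inl rfl
    | succ n ih =>
        rw [Function.iterate_succ_apply']
        rcases ih with h | h
        · rw [h]; exact Or.inr rfl
        · rw [h, h2]; exact Or.inl rfl
  obtain ⟨k, hk⟩ := hf.2 v
  rcases horb k with h | h <;> rw [hk] at h
  · exact hv h.symm
  · exact hfvz h.symm

lemma hgt_eq_zero {v : V} (h : hgt f z v = 0) : v = z := by
  have := hgt_spec (hf.2 v)
  rwa [h] at this

end IsParent

/-- The tree graph associated to a parent function. -/
def phi (z : V) (f : V → V) : SimpleGraph V := SimpleGraph.fromRel (fun a b => a ≠ z ∧ f a = b)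

lemma phi_adj {f : V → V} {a b : V} :
    (phi z f).Adj a b ↔ a ≠ b ∧ ((a ≠ z ∧ f a = b) ∨ (b ≠ z ∧ f b = a)) :=
  SimpleGraph.fromRel_adj _ _ _

lemma phi_adj_parent {f : V → V} (hf : IsParent z f) {v : V} (hv : v ≠ z) :
    (phi z f).Adj v (f v) :=
  phi_adj.mpr ⟨fun h => hf.no_fix hv h.symm, Or.inl ⟨hv, rfl⟩⟩

lemma phi_connected {f : V → V} (hf : IsParent z f) : (phi z f).Connected := by
  have hreach : ∀ (k : ℕ) (v : V), f^[k] v = z → (phi z f).Reachable v z := by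
    intro k
    induction k with
    | zero => intro v h; exact h ▸ Reachable.refl _
    | succ n ih =>
        intro v h
        by_cases hv : v = z
        · exact hv ▸ Reachable.refl _
        · exact ((phi_adj_parent hf hv).reachable).trans
            (ih (f v) (by rwa [← Function.iterate_succ_apply]))
  have : Nonempty V := ⟨z⟩
  refine ⟨fun v w => ?_⟩
  obtain ⟨k, hk⟩ := hf.2 v
  obtain ⟨m, hm⟩ := hf.2 w
  exact (hreach k v hk).trans (hreach m w hm).symm

/-- In the graph of a parent function, any path towards a vertex at lower or equal height
starts with the parent edge. -/
lemma path_getVert_one {f : V → V} (hf : IsParent z f) :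
    ∀ (n : ℕ) (v w : V) (P : (phi z f).Walk v w), P.IsPath → P.length ≤ n → v ≠ w →
      hgt f z w ≤ hgt f z v → P.getVert 1 = f v := by
  intro n
  induction n with
  | zero =>
    intro v w P hP hlen hvw _
    rw [Nat.le_zero] at hlen
    exact absurd ((SimpleGraph.Walk.nil_iff_length_eq).mpr hlen).eq hvw
  | succ n ih =>
    intro v w P hP hlen hvw hhgt
    have hnil : ¬ P.Nil := SimpleGraph.Walk.not_nil_of_ne hvw
    have hadj : (phi z f).Adj v (P.getVert 1) := SimpleGraph.Walk.adj_snd hnil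
    have hvz : v ≠ z := by
      intro h
      subst h
      rw [hgt_self] at hhgt
      exact hvw (hf.hgt_eq_zero (by omega)).symm
    rcases (phi_adj.mp hadj).2 with ⟨_, h⟩ | ⟨hxz, hxv⟩
    · exact h.symm
    · -- the first edge goes from v to a child x of v; derive a contradiction
      set x := P.getVert 1 with hx
      exfalso
      have hxhgt : hgt f z v < hgt f z x := by
        have := hgt_lt (hf.2 x) hxz
        rw [hxv] at this
        exact this
      have hxw : x ≠ w := by
        intro h
        rw [h] at hxhgt
        omega
      have htail : P.tail.IsPath := hP.tail
      have htlen : P.tail.length ≤ n := by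
        have := SimpleGraph.Walk.length_tail_add_one hnil
        omega
      have := ih x w P.tail htail htlen hxw (by omega)
      rw [hxv] at this
      have hvmem : v ∈ P.tail.support := by
        rw [SimpleGraph.Walk.mem_support_iff_exists_getVert]
        refine ⟨1, this, ?_⟩
        have h2 : ¬ P.tail.Nil := SimpleGraph.Walk.not_nil_of_ne (p := P.tail) hxw
        have := SimpleGraph.Walk.not_nil_iff_lt_length.mp h2
        omega
      have hPeq := SimpleGraph.Walk.cons_tail_eq P hnil
      rw [← hPeq] at hP
      exact ((SimpleGraph.Walk.cons_isPath_iff _ _).mp hP).2 hvmem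

lemma path_unique {f : V → V} (hf : IsParent z f) :
    ∀ (m : ℕ) (v w : V) (P Q : (phi z f).Walk v w), P.IsPath → Q.IsPath →
      hgt f z v + hgt f z w ≤ m → P = Q := by
  intro m
  induction m with
  | zero =>
    intro v w P Q hP hQ hm
    have hv : v = z := hf.hgt_eq_zero (by omega)
    have hw : w = z := hf.hgt_eq_zero (by omega)
    subst hv; subst hw
    rw [SimpleGraph.Walk.isPath_iff_eq_nil.mp hP,
      SimpleGraph.Walk.isPath_iff_eq_nil.mp hQ]
  | succ m ih =>
    intro v w P Q hP hQ hm
    by_cases hvw : v = w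
    · subst hvw
      rw [SimpleGraph.Walk.isPath_iff_eq_nil.mp hP,
        SimpleGraph.Walk.isPath_iff_eq_nil.mp hQ]
    · rcases le_total (hgt f z w) (hgt f z v) with hle | hle
      · -- peel the first vertex
        have hvz : v ≠ z := by
          intro h
          subst h
          rw [hgt_self] at hle
          exact hvw (hf.hgt_eq_zero (by omega)).symm
        have hPnil : ¬ P.Nil := SimpleGraph.Walk.not_nil_of_ne hvw
        have hQnil : ¬ Q.Nil := SimpleGraph.Walk.not_nil_of_ne hvw
        have hP1 := path_getVert_one hf P.length v w P hP le_rfl hvw hle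
        have hQ1 := path_getVert_one hf Q.length v w Q hQ le_rfl hvw hle
        obtain ⟨x, hadj, P', rfl⟩ := SimpleGraph.Walk.not_nil_iff.mp hPnil
        obtain ⟨y, hadj', Q', rfl⟩ := SimpleGraph.Walk.not_nil_iff.mp hQnil
        simp only [SimpleGraph.Walk.getVert_cons_succ, SimpleGraph.Walk.getVert_zero] at hP1 hQ1
        subst hP1; subst hQ1
        have hlt := hgt_lt (hf.2 v) hvz
        have := ih (f v) w P' Q' hP.of_cons hQ.of_cons (by omega)
        subst this
        rfl
      · -- peel the last vertex, by reversing
        have hwz : w ≠ z := by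
          intro h
          subst h
          rw [hgt_self] at hle
          exact hvw (hf.hgt_eq_zero (by omega))
        have hPnil : ¬ P.reverse.Nil := SimpleGraph.Walk.not_nil_of_ne (Ne.symm hvw)
        have hQnil : ¬ Q.reverse.Nil := SimpleGraph.Walk.not_nil_of_ne (Ne.symm hvw)
        have hP1 := path_getVert_one hf P.reverse.length w v P.reverse hP.reverse le_rfl
          (Ne.symm hvw) hle
        have hQ1 := path_getVert_one hf Q.reverse.length w v Q.reverse hQ.reverse le_rfl
          (Ne.symm hvw) hle
        have hrev : P.reverse = Q.reverse := by
          obtain ⟨x, hadj, P', hPeq⟩ := SimpleGraph.Walk.not_nil_iff.mp hPnil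
          obtain ⟨y, hadj', Q', hQeq⟩ := SimpleGraph.Walk.not_nil_iff.mp hQnil
          have hP' : P.reverse.IsPath := hP.reverse
          have hQ' : Q.reverse.IsPath := hQ.reverse
          rw [hPeq] at hP1 hP' ⊢
          rw [hQeq] at hQ1 hQ' ⊢
          simp only [SimpleGraph.Walk.getVert_cons_succ, SimpleGraph.Walk.getVert_zero] at hP1 hQ1
          subst hP1; subst hQ1
          have hlt := hgt_lt (hf.2 w) hwz
          have := ih (f w) v P' Q' hP'.of_cons hQ'.of_cons (by omega)
          subst this
          rfl
        have := congrArg SimpleGraph.Walk.reverse hrev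
        rwa [SimpleGraph.Walk.reverse_reverse, SimpleGraph.Walk.reverse_reverse] at this

lemma phi_isTree {f : V → V} (hf : IsParent z f) : (phi z f).IsTree := by
  rw [SimpleGraph.isTree_iff_existsUnique_path]
  refine ⟨⟨z⟩, fun v w => ?_⟩
  obtain ⟨P⟩ := (phi_connected hf).preconnected v w
  refine ⟨(P.toPath : (phi z f).Walk v w), (P.toPath).2, fun Q hQ => ?_⟩
  exact path_unique hf _ v w Q (P.toPath : (phi z f).Walk v w) hQ (P.toPath).2 le_rfl




variable {α : Type*} [LinearOrder α]

/-- `f` is (the parent function of) a tree on vertex set `insert r s`, rooted at `r`,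
extended by `r` outside `s`. -/
def IsPTree (s : Finset α) (r : α) (f : α → α) : Prop :=
  (∀ v ∈ s, f v ∈ insert r s) ∧ (∀ v, v ∉ s → f v = r) ∧ (∀ v, ∃ k, f^[k] v = r)

namespace IsPTree

variable {s : Finset α} {r : α} {f : α → α}

lemma no_fix (hf : IsPTree s r f) (hrs : r ∉ s) {v : α} (hv : v ∈ s) : f v ≠ v := by
  intro h
  obtain ⟨k, hk⟩ := hf.2.2 v
  have : ∀ k, f^[k] v = v := by
    intro k; induction k with
    | zero => rfl
    | succ n ih => rw [Function.iterate_succ_apply', ih, h]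
  rw [this k] at hk; exact hrs (hk ▸ hv)

lemma maps_to (hf : IsPTree s r f) (hr : r ∉ s) {v : α} (hv : v ∈ insert r s) :
    f v ∈ insert r s := by
  rcases Finset.mem_insert.mp hv with rfl | hv
  · rw [hf.2.1 v hr]; exact Finset.mem_insert_self _ _
  · exact hf.1 v hv

lemma iter_mem (hf : IsPTree s r f) (hr : r ∉ s) {v : α} (hv : v ∈ insert r s) (k : ℕ) :
    f^[k] v ∈ insert r s := by
  induction k with
  | zero => exact hv
  | succ n ih => rw [Function.iterate_succ_apply']; exact hf.maps_to hr ih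

lemma eq_const (hf : IsPTree s r f) (hr : r ∉ s) (h1 : s.card ≤ 1) :
    f = fun _ => r := by
  funext v
  by_cases hv : v ∈ s
  · rcases Finset.mem_insert.mp (hf.1 v hv) with h | h
    · exact h
    · exact absurd (Finset.card_le_one.mp h1 _ h _ hv) (hf.no_fix hr hv)
  · exact hf.2.1 v hv

end IsPTree

lemma iterate_update_of_ne {f : α → α} {ℓ a v : α} (h : ∀ k, f^[k] v ≠ ℓ) (k : ℕ) :
    (update f ℓ a)^[k] v = f^[k] v := by
  induction k with
  | zero => rfl
  | succ n ih =>
      rw [Function.iterate_succ_apply', Function.iterate_succ_apply', ih,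
        Function.update_of_ne (h n)]

/-- The leaves: vertices of `s` with no preimage in `s`. -/
def leaves (s : Finset α) (f : α → α) : Finset α := s.filter (fun v => ∀ y ∈ s, f y ≠ v)

lemma mem_leaves {s : Finset α} {f : α → α} {v : α} :
    v ∈ leaves s f ↔ v ∈ s ∧ ∀ y ∈ s, f y ≠ v := Finset.mem_filter

lemma exists_leaf {s : Finset α} {r : α} {f : α → α} (hf : IsPTree s r f) (hr : r ∉ s)
    (hs : s.Nonempty) : (leaves s f).Nonempty := by
  obtain ⟨v, hv, hmax⟩ := s.exists_max_image (hgt f r) hs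
  refine ⟨v, mem_leaves.mpr ⟨hv, fun y hy hfy => ?_⟩⟩
  have hyr : y ≠ r := fun h => hr (h ▸ hy)
  have := hgt_lt (hf.2.2 y) hyr
  rw [hfy] at this
  exact absurd (hmax y hy) (by omega)

lemma erase_leaf {s : Finset α} {r : α} {f : α → α} (hf : IsPTree s r f) (hr : r ∉ s)
    {ℓ : α} (hℓ : ℓ ∈ leaves s f) : IsPTree (s.erase ℓ) r (update f ℓ r) := by
  obtain ⟨hℓs, hleaf⟩ := mem_leaves.mp hℓ
  have hstep : ∀ w ∈ insert r (s.erase ℓ), f w ∈ insert r (s.erase ℓ) := by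
    intro w hw
    rcases Finset.mem_insert.mp hw with rfl | hw
    · rw [hf.2.1 w hr]; exact Finset.mem_insert_self _ _
    · have h1 := hf.1 w (Finset.mem_of_mem_erase hw)
      have h2 := hleaf w (Finset.mem_of_mem_erase hw)
      rcases Finset.mem_insert.mp h1 with h | h
      · exact h ▸ Finset.mem_insert_self _ _
      · exact Finset.mem_insert_of_mem (Finset.mem_erase.mpr ⟨h2, h⟩)
  have hiter : ∀ w ∈ insert r (s.erase ℓ), ∀ k, f^[k] w ∈ insert r (s.erase ℓ) := by
    intro w hw k
    induction k with
    | zero => exact hw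
    | succ n ih => rw [Function.iterate_succ_apply']; exact hstep _ ih
  have hnel : ℓ ∉ insert r (s.erase ℓ) := by
    simp only [Finset.mem_insert, Finset.mem_erase]
    push_neg
    exact ⟨fun h => hr (h ▸ hℓs), fun h => absurd rfl h⟩
  refine ⟨?_, ?_, ?_⟩
  · intro v hv
    rw [Function.update_of_ne (Finset.ne_of_mem_erase hv)]
    exact hstep v (Finset.mem_insert_of_mem hv)
  · intro v hv
    by_cases hvℓ : v = ℓ
    · subst hvℓ; exact Function.update_self _ _ _
    · rw [Function.update_of_ne hvℓ]
      exact hf.2.1 v (fun h => hv (Finset.mem_erase.mpr ⟨hvℓ, h⟩))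
  · intro v
    by_cases hv : v ∈ insert r (s.erase ℓ)
    · have hne : ∀ k, f^[k] v ≠ ℓ := fun k h => hnel (h ▸ hiter v hv k)
      obtain ⟨k, hk⟩ := hf.2.2 v
      exact ⟨k, (iterate_update_of_ne hne k).trans hk⟩
    · refine ⟨1, ?_⟩
      rw [Function.iterate_one]
      by_cases hvℓ : v = ℓ
      · subst hvℓ; exact Function.update_self _ _ _
      · rw [Function.update_of_ne hvℓ]
        refine hf.2.1 v (fun h => hv ?_)
        exact Finset.mem_insert_of_mem (Finset.mem_erase.mpr ⟨hvℓ, h⟩)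

lemma insert_tree {s' : Finset α} {r : α} {f' : α → α} (hf' : IsPTree s' r f') (hr' : r ∉ s')
    {ℓ a : α} (hℓ : ℓ ∉ s') (hℓr : ℓ ≠ r) (ha : a ∈ insert r s') (haℓ : a ≠ ℓ) :
    IsPTree (insert ℓ s') r (update f' ℓ a) := by
  have hiter : ∀ w ∈ insert r s', ∀ k, f'^[k] w ≠ ℓ := by
    intro w hw k h
    have := hf'.iter_mem hr' hw k
    rw [h] at this
    rcases Finset.mem_insert.mp this with h' | h'
    · exact hℓr h'
    · exact hℓ h'
  have hreach : ∀ w ∈ insert r s', ∃ k, (update f' ℓ a)^[k] w = r := by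
    intro w hw
    obtain ⟨k, hk⟩ := hf'.2.2 w
    exact ⟨k, (iterate_update_of_ne (hiter w hw) k).trans hk⟩
  refine ⟨?_, ?_, ?_⟩
  · intro v hv
    rcases Finset.mem_insert.mp hv with rfl | hv
    · rw [Function.update_self]
      rcases Finset.mem_insert.mp ha with h | h
      · exact h ▸ Finset.mem_insert_self _ _
      · exact Finset.mem_insert_of_mem (Finset.mem_insert_of_mem h)
    · rw [Function.update_of_ne (fun h : v = ℓ => hℓ (h ▸ hv))]
      rcases Finset.mem_insert.mp (hf'.1 v hv) with h | h
      · exact h ▸ Finset.mem_insert_self _ _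
      · exact Finset.mem_insert_of_mem (Finset.mem_insert_of_mem h)
  · intro v hv
    rw [Finset.mem_insert] at hv
    push_neg at hv
    rw [Function.update_of_ne hv.1]
    exact hf'.2.1 v hv.2
  · intro v
    by_cases hv : v ∈ insert r s'
    · exact hreach v hv
    · by_cases hvℓ : v = ℓ
      · subst hvℓ
        obtain ⟨k, hk⟩ := hreach a ha
        refine ⟨k + 1, ?_⟩
        rw [Function.iterate_succ_apply, Function.update_self]
        exact hk
      · refine ⟨1, ?_⟩
        rw [Function.iterate_one, Function.update_of_ne hvℓ]
        exact hf'.2.1 v (fun h => hv (Finset.mem_insert_of_mem h))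



variable {α : Type*} [LinearOrder α]

/-- Prüfer encoding: repeatedly record the parent of the least leaf and remove it. -/
def prE (r : α) (f : α → α) (s : Finset α) : List α :=
  if h : 2 ≤ s.card ∧ (leaves s f).Nonempty then
    f ((leaves s f).min' h.2) ::
      prE r (update f ((leaves s f).min' h.2) r) (s.erase ((leaves s f).min' h.2))
  else []
termination_by s.card
decreasing_by
  exact Finset.card_erase_lt_of_mem
    (Finset.mem_of_mem_filter _ ((leaves s f).min'_mem h.2))

/-- Prüfer decoding. -/
def prD (r : α) : List α → Finset α → (α → α)
  | [], _ => fun _ => r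
  | a :: l, s =>
    if h : (s \ (a :: l).toFinset).Nonempty then
      update (prD r l (s.erase ((s \ (a :: l).toFinset).min' h)))
        ((s \ (a :: l).toFinset).min' h) a
    else fun _ => r

lemma prE_nil {r : α} {f : α → α} {s : Finset α} (h : ¬ (2 ≤ s.card ∧ (leaves s f).Nonempty)) :
    prE r f s = [] := by rw [prE, dif_neg h]

lemma prE_cons {r : α} {f : α → α} {s : Finset α} (h : 2 ≤ s.card ∧ (leaves s f).Nonempty) :
    prE r f s = f ((leaves s f).min' h.2) ::
      prE r (update f ((leaves s f).min' h.2) r) (s.erase ((leaves s f).min' h.2)) := by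
  rw [prE, dif_pos h]

lemma min'_congr {s t : Finset α} (h : s = t) (hs : s.Nonempty) :
    s.min' hs = t.min' (h ▸ hs) := by subst h; rfl

lemma prE_length {r : α} : ∀ n (s : Finset α) (f : α → α), s.card ≤ n → r ∉ s →
    IsPTree s r f → (prE r f s).length = s.card - 1 := by
  intro n
  induction n with
  | zero =>
      intro s f h hr hf
      rw [prE_nil (by omega)]
      simp only [List.length_nil]
      omega
  | succ n ih =>
    intro s f hn hr hf
    by_cases h2 : 2 ≤ s.card
    · have hL := exists_leaf hf hr (Finset.card_pos.mp (by omega))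
      rw [prE_cons ⟨h2, hL⟩]
      set ℓ := (leaves s f).min' hL with hℓdef
      have hℓs : ℓ ∈ s := Finset.mem_of_mem_filter _ ((leaves s f).min'_mem hL)
      have hcard : (s.erase ℓ).card = s.card - 1 := Finset.card_erase_of_mem hℓs
      rw [List.length_cons, ih (s.erase ℓ) (update f ℓ r) (by omega)
        (fun h => hr (Finset.mem_of_mem_erase h)) (erase_leaf hf hr ((leaves s f).min'_mem hL))]
      omega
    · rw [prE_nil (fun h => h2 h.1)]
      simp only [List.length_nil]
      omega

lemma prE_mem {r : α} : ∀ n (s : Finset α) (f : α → α), s.card ≤ n → r ∉ s →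
    IsPTree s r f → ∀ x ∈ prE r f s, x ∈ insert r s := by
  intro n
  induction n with
  | zero => intro s f h hr hf x hx; rw [prE_nil (by omega)] at hx; cases hx
  | succ n ih =>
    intro s f hn hr hf x hx
    by_cases h : 2 ≤ s.card ∧ (leaves s f).Nonempty
    · rw [prE_cons h] at hx
      set ℓ := (leaves s f).min' h.2 with hℓdef
      have hℓs : ℓ ∈ s := Finset.mem_of_mem_filter _ ((leaves s f).min'_mem h.2)
      have hcard : (s.erase ℓ).card = s.card - 1 := Finset.card_erase_of_mem hℓs
      rcases List.mem_cons.mp hx with rfl | hx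
      · exact hf.1 ℓ hℓs
      · have := ih (s.erase ℓ) (update f ℓ r) (by omega)
          (fun h' => hr (Finset.mem_of_mem_erase h'))
          (erase_leaf hf hr ((leaves s f).min'_mem h.2)) x hx
        rcases Finset.mem_insert.mp this with rfl | h'
        · exact Finset.mem_insert_self _ _
        · exact Finset.mem_insert_of_mem (Finset.mem_of_mem_erase h')
    · rw [prE_nil h] at hx; cases hx

lemma mem_prE_iff {r : α} : ∀ n (s : Finset α) (f : α → α), s.card ≤ n → r ∉ s →
    IsPTree s r f → ∀ x, x ≠ r → (x ∈ prE r f s ↔ ∃ y ∈ s, f y = x) := by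
  intro n
  induction n with
  | zero =>
    intro s f hn hr hf x hx
    have hs : s = ∅ := Finset.card_eq_zero.mp (by omega)
    subst hs
    rw [prE_nil (by simp)]
    simp
  | succ n ih =>
    intro s f hn hr hf x hx
    by_cases h2 : 2 ≤ s.card
    · have hL := exists_leaf hf hr (Finset.card_pos.mp (by omega))
      rw [prE_cons ⟨h2, hL⟩]
      set ℓ := (leaves s f).min' hL with hℓdef
      have hℓmem := (leaves s f).min'_mem hL
      have hℓs : ℓ ∈ s := Finset.mem_of_mem_filter _ hℓmem
      have hcard : (s.erase ℓ).card = s.card - 1 := Finset.card_erase_of_mem hℓs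
      have hrec := ih (s.erase ℓ) (update f ℓ r) (by omega)
        (fun h' => hr (Finset.mem_of_mem_erase h')) (erase_leaf hf hr hℓmem) x hx
      constructor
      · intro hmem
        rcases List.mem_cons.mp hmem with rfl | hmem
        · exact ⟨ℓ, hℓs, rfl⟩
        · obtain ⟨y, hy, hfy⟩ := hrec.mp hmem
          refine ⟨y, Finset.mem_of_mem_erase hy, ?_⟩
          rwa [Function.update_of_ne (Finset.ne_of_mem_erase hy)] at hfy
      · rintro ⟨y, hy, rfl⟩
        by_cases hyℓ : y = ℓ
        · subst hyℓ; exact List.mem_cons_self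
        · refine List.mem_cons_of_mem _ (hrec.mpr ⟨y, Finset.mem_erase.mpr ⟨hyℓ, hy⟩, ?_⟩)
          rw [Function.update_of_ne hyℓ]
    · rw [prE_nil (fun h => h2 h.1)]
      simp only [List.not_mem_nil, false_iff]
      rintro ⟨y, hy, rfl⟩
      have := hf.eq_const hr (by omega)
      exact hx (congrFun this y)



variable {α : Type*} [LinearOrder α]

lemma sdiff_nonempty_of_length {s : Finset α} {l : List α} (hlen : l.length = s.card - 1)
    (hne : l ≠ []) : (s \ l.toFinset).Nonempty := by
  rw [Finset.sdiff_nonempty]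
  intro hsub
  have h1 : s.card ≤ l.toFinset.card := Finset.card_le_card hsub
  have h2 : l.toFinset.card ≤ l.length := l.toFinset_card_le
  have h3 : 1 ≤ l.length := by
    cases l with
    | nil => exact absurd rfl hne
    | cons a l => simp
  omega

lemma prD_isPTree {r : α} : ∀ (l : List α) (s : Finset α), r ∉ s → l.length = s.card - 1 →
    (∀ x ∈ l, x ∈ insert r s) → IsPTree s r (prD r l s) := by
  intro l
  induction l with
  | nil =>
    intro s hr _ _
    refine ⟨fun v _ => Finset.mem_insert_self _ _, fun v _ => rfl, fun v => ⟨1, rfl⟩⟩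
  | cons a l ih =>
    intro s hr hlen hmem
    have hcard : s.card = l.length + 2 := by
      simp only [List.length_cons] at hlen
      have : 1 ≤ s.card := by
        by_contra h
        push_neg at h
        interval_cases h' : s.card <;> omega
      omega
    have hsd : (s \ (a :: l).toFinset).Nonempty :=
      sdiff_nonempty_of_length hlen (by simp)
    rw [prD, dif_pos hsd]
    set ℓ := (s \ (a :: l).toFinset).min' hsd with hℓdef
    have hℓmem := (s \ (a :: l).toFinset).min'_mem hsd
    rw [Finset.mem_sdiff] at hℓmem
    obtain ⟨hℓs, hℓnl⟩ := hℓmem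
    rw [List.mem_toFinset, List.mem_cons] at hℓnl
    push_neg at hℓnl
    have hrerase : r ∉ s.erase ℓ := fun h => hr (Finset.mem_of_mem_erase h)
    have hcarde : (s.erase ℓ).card = s.card - 1 := Finset.card_erase_of_mem hℓs
    have hmem' : ∀ x ∈ l, x ∈ insert r (s.erase ℓ) := by
      intro x hx
      have := hmem x (List.mem_cons_of_mem _ hx)
      rcases Finset.mem_insert.mp this with rfl | h
      · exact Finset.mem_insert_self _ _
      · refine Finset.mem_insert_of_mem (Finset.mem_erase.mpr ⟨?_, h⟩)
        intro heq
        subst heq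
        exact hℓnl.2 hx
    have hf' := ih (s.erase ℓ) hrerase (by omega) hmem'
    have ha : a ∈ insert r (s.erase ℓ) := by
      rcases Finset.mem_insert.mp (hmem a (List.mem_cons_self)) with rfl | h
      · exact Finset.mem_insert_self _ _
      · exact Finset.mem_insert_of_mem (Finset.mem_erase.mpr ⟨fun h' => hℓnl.1 h'.symm, h⟩)
    have := insert_tree hf' hrerase (Finset.notMem_erase _ _)
      (fun h => hr (h ▸ hℓs)) ha (fun h => hℓnl.1 h.symm)
    rwa [Finset.insert_erase hℓs] at this

lemma prD_prE {r : α} : ∀ n (s : Finset α) (f : α → α), s.card ≤ n → r ∉ s →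
    IsPTree s r f → prD r (prE r f s) s = f := by
  intro n
  induction n with
  | zero =>
    intro s f hn hr hf
    rw [prE_nil (by omega), prD, (hf.eq_const hr (by omega))]
  | succ n ih =>
    intro s f hn hr hf
    by_cases h2 : 2 ≤ s.card
    · have hL := exists_leaf hf hr (Finset.card_pos.mp (by omega))
      rw [prE_cons ⟨h2, hL⟩]
      set ℓ := (leaves s f).min' hL with hℓdef
      have hℓmem := (leaves s f).min'_mem hL
      have hℓs : ℓ ∈ s := Finset.mem_of_mem_filter _ hℓmem
      have hcarde : (s.erase ℓ).card = s.card - 1 := Finset.card_erase_of_mem hℓs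
      have hrerase : r ∉ s.erase ℓ := fun h => hr (Finset.mem_of_mem_erase h)
      have hf' := erase_leaf hf hr hℓmem
      set E' := prE r (update f ℓ r) (s.erase ℓ) with hE'def
      -- the set of non-values is the leaf set
      have hset : s \ (f ℓ :: E').toFinset = leaves s f := by
        ext x
        rw [Finset.mem_sdiff, mem_leaves, List.mem_toFinset]
        constructor
        · rintro ⟨hxs, hxl⟩
          refine ⟨hxs, fun y hy hfy => hxl ?_⟩
          rw [← prE_cons ⟨h2, hL⟩]
          exact (mem_prE_iff s.card s f le_rfl hr hf x (fun h => hr (h ▸ hxs))).mpr ⟨y, hy, hfy⟩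
        · rintro ⟨hxs, hlf⟩
          refine ⟨hxs, fun hxl => ?_⟩
          rw [← prE_cons ⟨h2, hL⟩] at hxl
          obtain ⟨y, hy, hfy⟩ :=
            (mem_prE_iff s.card s f le_rfl hr hf x (fun h => hr (h ▸ hxs))).mp hxl
          exact hlf y hy hfy
      have hsd : (s \ (f ℓ :: E').toFinset).Nonempty := by rw [hset]; exact hL
      rw [prD, dif_pos hsd]
      have hmin : (s \ (f ℓ :: E').toFinset).min' hsd = ℓ := by
        rw [min'_congr hset hsd]
      rw [hmin, ih (s.erase ℓ) (update f ℓ r) (by omega) hrerase hf',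
        Function.update_idem, Function.update_eq_self]
    · rw [prE_nil (fun h => h2 h.1), prD, (hf.eq_const hr (by omega))]

lemma prE_prD {r : α} : ∀ (l : List α) (s : Finset α), r ∉ s → l.length = s.card - 1 →
    (∀ x ∈ l, x ∈ insert r s) → prE r (prD r l s) s = l := by
  intro l
  induction l with
  | nil =>
    intro s hr hlen _
    simp only [List.length_nil] at hlen
    rw [prD, prE_nil (by omega)]
  | cons a l ih =>
    intro s hr hlen hmem
    have hcard : s.card = l.length + 2 := by
      simp only [List.length_cons] at hlen
      have : 1 ≤ s.card := by
        by_contra h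
        push_neg at h
        interval_cases h' : s.card <;> omega
      omega
    have hsd : (s \ (a :: l).toFinset).Nonempty :=
      sdiff_nonempty_of_length hlen (by simp)
    have hprd : prD r (a :: l) s =
        update (prD r l (s.erase ((s \ (a :: l).toFinset).min' hsd)))
          ((s \ (a :: l).toFinset).min' hsd) a := by
      rw [prD, dif_pos hsd]
    set ℓ := (s \ (a :: l).toFinset).min' hsd with hℓdef
    have hℓmem := (s \ (a :: l).toFinset).min'_mem hsd
    rw [Finset.mem_sdiff] at hℓmem
    obtain ⟨hℓs, hℓnl⟩ := hℓmem
    rw [List.mem_toFinset, List.mem_cons] at hℓnl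
    push_neg at hℓnl
    have hrerase : r ∉ s.erase ℓ := fun h => hr (Finset.mem_of_mem_erase h)
    have hcarde : (s.erase ℓ).card = s.card - 1 := Finset.card_erase_of_mem hℓs
    have hmem' : ∀ x ∈ l, x ∈ insert r (s.erase ℓ) := by
      intro x hx
      rcases Finset.mem_insert.mp (hmem x (List.mem_cons_of_mem _ hx)) with rfl | h
      · exact Finset.mem_insert_self _ _
      · exact Finset.mem_insert_of_mem
          (Finset.mem_erase.mpr ⟨fun heq => hℓnl.2 (show ℓ ∈ l by rw [← heq]; exact hx), h⟩)
    set f' := prD r l (s.erase ℓ) with hf'def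
    have hf' : IsPTree (s.erase ℓ) r f' := prD_isPTree l (s.erase ℓ) hrerase (by omega) hmem'
    set f := update f' ℓ a with hfdef
    have hf : IsPTree s r f := by
      have := prD_isPTree (a :: l) s hr hlen hmem
      rwa [hprd] at this
    have hIH : prE r f' (s.erase ℓ) = l := ih (s.erase ℓ) hrerase (by omega) hmem'
    -- leaves of f = s \ (a :: l).toFinset
    have hset : leaves s f = s \ (a :: l).toFinset := by
      ext x
      rw [Finset.mem_sdiff, mem_leaves, List.mem_toFinset]
      constructor
      · rintro ⟨hxs, hlf⟩
        refine ⟨hxs, fun hxl => ?_⟩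
        rcases List.mem_cons.mp hxl with rfl | hxl
        · exact hlf ℓ hℓs (Function.update_self _ _ _)
        · rw [← hIH] at hxl
          obtain ⟨y, hy, hfy⟩ := (mem_prE_iff (s.erase ℓ).card (s.erase ℓ) f' le_rfl hrerase
            hf' x (fun h => hr (h ▸ hxs))).mp hxl
          refine hlf y (Finset.mem_of_mem_erase hy) ?_
          rw [hfdef, Function.update_of_ne (Finset.ne_of_mem_erase hy)]
          exact hfy
      · rintro ⟨hxs, hxl⟩
        refine ⟨hxs, fun y hy hfy => ?_⟩
        by_cases hyℓ : y = ℓ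
        · subst hyℓ
          rw [hfdef, Function.update_self] at hfy
          exact hxl (hfy ▸ List.mem_cons_self)
        · rw [hfdef, Function.update_of_ne hyℓ] at hfy
          have : x ∈ prE r f' (s.erase ℓ) :=
            (mem_prE_iff (s.erase ℓ).card (s.erase ℓ) f' le_rfl hrerase hf' x
              (fun h => hr (h ▸ hxs))).mpr ⟨y, Finset.mem_erase.mpr ⟨hyℓ, hy⟩, hfy⟩
          rw [hIH] at this
          exact hxl (List.mem_cons_of_mem _ this)
    have hL : (leaves s f).Nonempty := by rw [hset]; exact hsd
    rw [hprd, prE_cons ⟨by omega, hL⟩]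
    have hmin : (leaves s f).min' hL = ℓ := by rw [min'_congr hset hL]
    rw [hmin]
    have hfℓ : f ℓ = a := Function.update_self _ _ _
    have hupd : update f ℓ r = f' := by
      rw [hfdef, Function.update_idem]
      have : f' ℓ = r := hf'.2.1 ℓ (Finset.notMem_erase _ _)
      rw [← this, Function.update_eq_self]
    rw [hfℓ, hupd, hIH]



variable {α : Type*} [LinearOrder α]

/-- Lists of a fixed length with entries in a finset, as functions. -/
def listEquiv (t : Finset α) (m : ℕ) :
    {l : List α // l.length = m ∧ ∀ x ∈ l, x ∈ t} ≃ (Fin m → {x : α // x ∈ t}) where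
  toFun l i := ⟨l.1.get (Fin.cast l.2.1.symm i), l.2.2 _ (List.get_mem _ _)⟩
  invFun g := ⟨List.ofFn (fun i => (g i : α)), by simp, by
    intro x hx
    rw [List.mem_ofFn] at hx
    obtain ⟨i, rfl⟩ := hx
    exact (g i).2⟩
  left_inv l := by
    apply Subtype.ext
    apply List.ext_get (by simp [l.2.1])
    intro i h1 h2
    simp [List.get_ofFn]
  right_inv g := by
    funext i
    apply Subtype.ext
    simp [List.get_ofFn]

lemma card_lists (t : Finset α) (m : ℕ) :
    Nat.card {l : List α // l.length = m ∧ ∀ x ∈ l, x ∈ t} = t.card ^ m := by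
  rw [Nat.card_congr (listEquiv t m), Nat.card_eq_fintype_card, Fintype.card_fun,
    Fintype.card_coe, Fintype.card_fin]

/-- The Prüfer correspondence as an equivalence. -/
noncomputable def prEquiv {r : α} {s : Finset α} (hr : r ∉ s) :
    {f : α → α // IsPTree s r f} ≃
      {l : List α // l.length = s.card - 1 ∧ ∀ x ∈ l, x ∈ insert r s} where
  toFun f := ⟨prE r f.1 s, prE_length s.card s f.1 le_rfl hr f.2,
    fun x hx => prE_mem s.card s f.1 le_rfl hr f.2 x hx⟩
  invFun l := ⟨prD r l.1 s, prD_isPTree l.1 s hr l.2.1 l.2.2⟩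
  left_inv f := Subtype.ext (prD_prE s.card s f.1 le_rfl hr f.2)
  right_inv l := Subtype.ext (prE_prD l.1 s hr l.2.1 l.2.2)

theorem card_isPTree {r : α} {s : Finset α} (hr : r ∉ s) :
    Nat.card {f : α → α // IsPTree s r f} = (s.card + 1) ^ (s.card - 1) := by
  rw [Nat.card_congr (prEquiv hr), card_lists, Finset.card_insert_of_notMem hr]



end Cayley

namespace Cayley2

open Cayley

variable {V : Type*} [Fintype V] [DecidableEq V] {z : V}

/-- The unique path between two vertices of a tree. -/
noncomputable def thePath {H : SimpleGraph V} (hH : H.IsTree) (v w : V) : H.Walk v w :=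
  (hH.existsUnique_path v w).choose

lemma thePath_isPath {H : SimpleGraph V} (hH : H.IsTree) (v w : V) :
    (thePath hH v w).IsPath := (hH.existsUnique_path v w).choose_spec.1

lemma thePath_unique {H : SimpleGraph V} (hH : H.IsTree) {v w : V} {Q : H.Walk v w}
    (hQ : Q.IsPath) : Q = thePath hH v w := (hH.existsUnique_path v w).choose_spec.2 Q hQ

/-- The parent function of a tree, rooted at `z`. -/
noncomputable def pa {H : SimpleGraph V} (hH : H.IsTree) (z : V) (v : V) : V :=
  if v = z then z else (thePath hH v z).getVert 1

lemma pa_root {H : SimpleGraph V} (hH : H.IsTree) : pa hH z z = z := if_pos rfl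

lemma pa_adj {H : SimpleGraph V} (hH : H.IsTree) {v : V} (hv : v ≠ z) :
    H.Adj v (pa hH z v) := by
  rw [pa, if_neg hv]
  exact SimpleGraph.Walk.adj_snd (SimpleGraph.Walk.not_nil_of_ne hv)

lemma pa_reach {H : SimpleGraph V} (hH : H.IsTree) :
    ∀ (n : ℕ) (v : V), (thePath hH v z).length ≤ n → ∃ k, (pa hH z)^[k] v = z := by
  intro n
  induction n with
  | zero =>
    intro v hlen
    have : (thePath hH v z).Nil := SimpleGraph.Walk.nil_iff_length_eq.mpr (by omega)
    exact ⟨0, this.eq⟩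
  | succ n ih =>
    intro v hlen
    by_cases hv : v = z
    · exact ⟨0, hv⟩
    · have hnil : ¬ (thePath hH v z).Nil := SimpleGraph.Walk.not_nil_of_ne hv
      have htail : (thePath hH v z).tail.IsPath := (thePath_isPath hH v z).tail
      have heq : (thePath hH v z).tail = thePath hH ((thePath hH v z).getVert 1) z :=
        thePath_unique hH htail
      have hlen' : (thePath hH ((thePath hH v z).getVert 1) z).length ≤ n := by
        rw [← heq]
        have := SimpleGraph.Walk.length_tail_add_one hnil
        omega
      obtain ⟨k, hk⟩ := ih _ hlen'
      refine ⟨k + 1, ?_⟩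
      rw [Function.iterate_succ_apply]
      have : pa hH z v = (thePath hH v z).getVert 1 := if_neg hv
      rw [this]
      exact hk

lemma pa_isParent {H : SimpleGraph V} (hH : H.IsTree) : IsParent z (pa hH z) :=
  ⟨pa_root hH, fun v => pa_reach hH _ v le_rfl⟩

instance {f : V → V} : DecidableRel (phi z f).Adj := fun _ _ => decidable_of_iff' _ phi_adj

lemma phi_edgeFinset {f : V → V} (hf : IsParent z f) :
    (phi z f).edgeFinset = (Finset.univ.erase z).image (fun v => s(v, f v)) := by
  ext e
  refine Sym2.ind (fun a b => ?_) e
  rw [SimpleGraph.mem_edgeFinset, SimpleGraph.mem_edgeSet]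
  constructor
  · intro hab
    obtain ⟨hne, h⟩ := phi_adj.mp hab
    rcases h with ⟨haz, hfa⟩ | ⟨hbz, hfb⟩
    · exact Finset.mem_image.mpr ⟨a, Finset.mem_erase.mpr ⟨haz, Finset.mem_univ _⟩, by rw [hfa]⟩
    · exact Finset.mem_image.mpr ⟨b, Finset.mem_erase.mpr ⟨hbz, Finset.mem_univ _⟩,
        by rw [hfb]; exact Sym2.eq_swap⟩
  · intro h
    obtain ⟨v, hv, heq⟩ := Finset.mem_image.mp h
    have := phi_adj_parent hf (Finset.mem_erase.mp hv).1
    rw [← SimpleGraph.mem_edgeSet] at this ⊢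
    rwa [← heq]

lemma phi_card_edgeFinset {f : V → V} (hf : IsParent z f) :
    (phi z f).edgeFinset.card = Fintype.card V - 1 := by
  rw [phi_edgeFinset hf, Finset.card_image_of_injOn, Finset.card_erase_of_mem (Finset.mem_univ z),
    Finset.card_univ]
  intro v hv w hw hvw
  simp only [Sym2.eq, Sym2.rel_iff', Prod.mk.injEq, Prod.swap_prod_mk] at hvw
  rcases hvw with ⟨h1, _⟩ | ⟨h1, h2⟩
  · exact h1
  · by_contra hne
    have hvz := (Finset.mem_erase.mp (Finset.mem_coe.mp hv)).1
    refine hf.no_two_cycle hvz ?_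
    rw [h2]
    exact h1.symm

lemma phi_pa {H : SimpleGraph V} (hH : H.IsTree) : phi z (pa hH z) = H := by
  classical
  have hle : phi z (pa hH z) ≤ H := by
    intro a b hab
    obtain ⟨hne, h⟩ := phi_adj.mp hab
    rcases h with ⟨haz, hfa⟩ | ⟨hbz, hfb⟩
    · exact hfa ▸ pa_adj hH haz
    · exact (hfb ▸ pa_adj hH hbz).symm
  have hsub := SimpleGraph.edgeFinset_mono hle
  have hcard1 : (phi z (pa hH z)).edgeFinset.card = Fintype.card V - 1 :=
    phi_card_edgeFinset (pa_isParent hH)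
  have hcard2 : H.edgeFinset.card + 1 = Fintype.card V := hH.card_edgeFinset
  have : (phi z (pa hH z)).edgeFinset = H.edgeFinset :=
    Finset.eq_of_subset_of_card_le hsub (by omega)
  rw [← SimpleGraph.edgeSet_inj]
  have := congrArg (fun (t : Finset (Sym2 V)) => (t : Set (Sym2 V))) this
  simpa [Set.coe_toFinset] using this

lemma pa_phi {f : V → V} (hf : IsParent z f) : pa (phi_isTree hf) z = f := by
  funext v
  by_cases hv : v = z
  · rw [hv, pa_root, hf.1]
  · rw [pa, if_neg hv]
    exact path_getVert_one hf (thePath (phi_isTree hf) v z).length v z _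
      (thePath_isPath _ v z) le_rfl hv (by rw [hgt_self]; omega)

/-- Trees on `V` correspond to parent functions rooted at `z`. -/
noncomputable def treeEquiv (z : V) :
    {H : SimpleGraph V // H.IsTree} ≃ {f : V → V // IsParent z f} where
  toFun H := ⟨pa H.2 z, pa_isParent H.2⟩
  invFun f := ⟨phi z f.1, phi_isTree f.2⟩
  left_inv H := Subtype.ext (phi_pa H.2)
  right_inv f := Subtype.ext (pa_phi f.2)

end Cayley2


section Assembly

open Cayley Cayley2

variable {V : Type*} [Fintype V] [DecidableEq V]

/-- Spanning trees of the complete graph correspond to trees on the vertex type. -/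
def stEquiv :
    {T : (⊤ : SimpleGraph V).Subgraph // IsSpanningTree T} ≃ {H : SimpleGraph V // H.IsTree} where
  toFun T := ⟨T.1.spanningCoe, T.2.2⟩
  invFun H := ⟨SimpleGraph.toSubgraph H.1 le_top, SimpleGraph.toSubgraph.isSpanning _ _, H.2⟩
  left_inv T := by
    apply Subtype.ext
    apply SimpleGraph.Subgraph.ext
    · exact (T.2.1.verts_eq_univ).symm
    · rfl
  right_inv H := Subtype.ext rfl

/-- Cayley's formula: the complete graph on `p ≥ 1` labeled vertices has
`p ^ (p - 2)` spanning trees. -/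
theorem cayley_formula (p : ℕ) (hp : 1 ≤ p) :
    Nat.card {T : (⊤ : SimpleGraph (Fin p)).Subgraph // IsSpanningTree T} =
      p ^ (p - 2) := by
  set z : Fin p := ⟨0, hp⟩ with hz
  have h1 := Nat.card_congr ((stEquiv.trans (treeEquiv z)).trans
    (Equiv.subtypeEquivRight (q := fun f => IsPTree (Finset.univ.erase z) z f)
      (fun f => ?_)))
  · rw [h1, card_isPTree (Finset.notMem_erase _ _)]
    have hcard : (Finset.univ.erase z).card = p - 1 := by
      rw [Finset.card_erase_of_mem (Finset.mem_univ _), Finset.card_univ, Fintype.card_fin]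
    rw [hcard]
    have h2 : p - 1 + 1 = p := by omega
    have h3 : p - 1 - 1 = p - 2 := by omega
    rw [h2, h3]
  · constructor
    · rintro ⟨hfz, hreach⟩
      refine ⟨fun v _ => ?_, fun v hv => ?_, hreach⟩
      · simp only [Finset.mem_insert, Finset.mem_erase, Finset.mem_univ, and_true]
        tauto
      · simp only [Finset.mem_erase, Finset.mem_univ, and_true, not_not, Decidable.not_not] at hv
        rw [hv, hfz]
    · rintro ⟨_, houtside, hreach⟩
      refine ⟨houtside z ?_, hreach⟩
      simp

end Assembly
end

section
/- For a finite connected weighted graph in which exactly q edges share a common weight (all other weights being distinct), the number of distinct minimum spanning trees is at most q!. -/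
/-- Total weight of the edges of a subgraph of a finite graph. -/
noncomputable def subgraphWeight {V : Type*} [Fintype V] {G : SimpleGraph V}
    (w : Sym2 V → ℝ) (T : G.Subgraph) : ℝ :=
  ∑ e ∈ (Set.toFinite T.edgeSet).toFinset, w e

/-- `T` is a minimum spanning tree of `G` with respect to the weights `w`. -/
def IsMST {V : Type*} [Fintype V] {G : SimpleGraph V} (w : Sym2 V → ℝ)
    (T : G.Subgraph) : Prop :=
  IsSpanningTree T ∧ ∀ T' : G.Subgraph, IsSpanningTree T' →
    subgraphWeight w T ≤ subgraphWeight w T'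



section Helpers

open SimpleGraph

variable {V : Type*}

private lemma connected_of_forall_adj_reachable {G H : SimpleGraph V}
    (hG : G.Connected) (h : ∀ u v, G.Adj u v → H.Reachable u v) : H.Connected := by
  have hne : Nonempty V := hG.nonempty
  refine ⟨fun u v => ?_⟩
  obtain ⟨p⟩ := hG.preconnected u v
  induction p with
  | nil => exact Reachable.refl _
  | cons h' _ ih => exact (h _ _ h').trans ih

private lemma reachable_deleteEdges_or {G : SimpleGraph V} (x y : V) {v z : V}
    (p : G.Walk v z) :
    (G.deleteEdges {s(x,y)}).Reachable v z ∨ (G.deleteEdges {s(x,y)}).Reachable v x ∨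
      (G.deleteEdges {s(x,y)}).Reachable v y := by
  induction p with
  | nil => exact Or.inl (Reachable.refl _)
  | @cons a b _ hab p ih =>
    by_cases he : s(a, b) = s(x, y)
    · rw [Sym2.eq_iff] at he
      rcases he with ⟨rfl, rfl⟩ | ⟨rfl, rfl⟩
      · exact Or.inr (Or.inl (Reachable.refl _))
      · exact Or.inr (Or.inr (Reachable.refl _))
    · have hadj : (G.deleteEdges {s(x,y)}).Adj a b := by
        rw [deleteEdges_adj]
        exact ⟨hab, by simpa using he⟩
      rcases ih with h | h | h
      exacts [Or.inl (hadj.reachable.trans h), Or.inr (Or.inl (hadj.reachable.trans h)),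
        Or.inr (Or.inr (hadj.reachable.trans h))]

private lemma exists_crossing_dart {G : SimpleGraph V} (P : V → Prop) :
    ∀ {x y : V} (p : G.Walk x y), p.edges.Nodup → P x → ¬ P y →
    ∃ a b, G.Adj a b ∧ P a ∧ ¬ P b ∧ s(a,b) ∈ p.edges ∧
      (G.deleteEdges {s(a,b)}).Reachable x a ∧ (G.deleteEdges {s(a,b)}).Reachable b y := by
  intro x y p
  induction p with
  | nil => intro _ hx hy; exact absurd hx hy
  | @cons u v z huv p ih =>
    intro hnd hx hy
    rw [Walk.edges_cons, List.nodup_cons] at hnd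
    by_cases hPv : P v
    · obtain ⟨a, b, hab, hPa, hPb, hmem, hra, hrb⟩ := ih hnd.2 hPv hy
      have hne : s(u, v) ≠ s(a, b) := fun h => hnd.1 (h ▸ hmem)
      have hadj : (G.deleteEdges {s(a,b)}).Adj u v := by
        rw [deleteEdges_adj]
        exact ⟨huv, by simpa using hne⟩
      exact ⟨a, b, hab, hPa, hPb, List.mem_cons_of_mem _ hmem,
        hadj.reachable.trans hra, hrb⟩
    · exact ⟨u, v, huv, hx, hPv, List.mem_cons_self, Reachable.refl _,
        (p.toDeleteEdge _ hnd.1).reachable⟩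

private lemma exists_deleteEdges_connected {G : SimpleGraph V} (h : G.Connected)
    (hac : ¬ G.IsAcyclic) :
    ∃ e ∈ G.edgeSet, (G.deleteEdges {e}).Connected := by
  rw [IsAcyclic] at hac
  push_neg at hac
  obtain ⟨v, c, hc⟩ := hac
  cases c with
  | nil => exact absurd rfl hc.ne_nil
  | @cons _ u _ hadj p =>
    have hmem : s(v, u) ∈ (Walk.cons hadj p).edges := by simp
    have hnb : ¬ G.IsBridge s(v, u) := fun hb =>
      (isBridge_iff_forall_cycle_notMem hadj).mp hb _ hc hmem
    rw [isBridge_iff] at hnb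
    push_neg at hnb
    have hreach : (G \ fromEdgeSet {s(v,u)}).Reachable v u := hnb
    refine ⟨s(v, u), hadj, ?_⟩
    refine connected_of_forall_adj_reachable h fun a b hab => ?_
    by_cases he : s(a, b) = s(v, u)
    · rw [Sym2.eq_iff] at he
      rcases he with ⟨rfl, rfl⟩ | ⟨rfl, rfl⟩
      · exact hreach
      · exact hreach.symm
    · refine Adj.reachable ?_
      rw [deleteEdges_adj]
      exact ⟨hab, by simpa using he⟩

private lemma IsTree.ncard_edgeSet' {W : Type*} [Fintype W] {G : SimpleGraph W}
    (h : G.IsTree) : G.edgeSet.ncard + 1 = Fintype.card W := by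
  classical
  haveI : Fintype G.edgeSet := (Set.toFinite _).fintype
  rw [Set.ncard_eq_toFinset_card']
  exact h.card_edgeFinset

private lemma connected_card_le {W : Type*} [Fintype W] (G : SimpleGraph W)
    (h : G.Connected) : Fintype.card W ≤ G.edgeSet.ncard + 1 := by
  classical
  generalize hn : G.edgeSet.ncard = n
  induction n using Nat.strong_induction_on generalizing G with
  | _ n ih =>
  by_cases hac : G.IsAcyclic
  · exact le_of_eq ((IsTree.ncard_edgeSet' ⟨h, hac⟩).symm.trans (by rw [hn]))
  · obtain ⟨e, he, hconn⟩ := exists_deleteEdges_connected h hac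
    have hes : (G.deleteEdges {e}).edgeSet = G.edgeSet \ {e} := edgeSet_deleteEdges {e}
    have hpos : G.edgeSet.ncard ≠ 0 := by
      intro h0
      rw [Set.ncard_eq_zero (Set.toFinite _)] at h0
      simp [h0] at he
    have hcard : (G.deleteEdges {e}).edgeSet.ncard = n - 1 := by
      rw [hes, Set.ncard_diff_singleton_of_mem he, hn]
    have := ih (n - 1) (by omega) _ hconn hcard
    omega

private lemma isTree_of_connected_of_ncard {W : Type*} [Fintype W] {G : SimpleGraph W}
    (h : G.Connected) (hcard : G.edgeSet.ncard + 1 ≤ Fintype.card W) : G.IsTree := by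
  refine ⟨h, ?_⟩
  by_contra hac
  obtain ⟨e, he, hconn⟩ := exists_deleteEdges_connected h hac
  have hle := connected_card_le _ hconn
  rw [edgeSet_deleteEdges, Set.ncard_diff_singleton_of_mem he] at hle
  have hpos : G.edgeSet.ncard ≠ 0 := by
    intro h0
    rw [Set.ncard_eq_zero (Set.toFinite _)] at h0
    simp [h0] at he
  omega

private lemma edgeSet_swap (S : SimpleGraph V) (e f : Sym2 V) (hf : ¬ f.IsDiag) :
    (S.deleteEdges {e} ⊔ fromEdgeSet {f}).edgeSet = insert f (S.edgeSet \ {e}) := by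
  rw [edgeSet_sup, edgeSet_deleteEdges, edgeSet_fromEdgeSet]
  ext g
  simp only [Set.mem_union, Set.mem_diff, Set.mem_singleton_iff, Set.mem_insert_iff,
    Set.mem_setOf_eq]
  constructor
  · rintro (⟨hg, hge⟩ | ⟨rfl, _⟩)
    · exact Or.inr ⟨hg, hge⟩
    · exact Or.inl rfl
  · rintro (rfl | ⟨hg, hge⟩)
    · exact Or.inr ⟨rfl, hf⟩
    · exact Or.inl ⟨hg, hge⟩

private lemma swap_isTree {W : Type*} [Fintype W] {S S' : SimpleGraph W}
    (hS : S.IsTree) (hS' : S'.IsTree) {x y : W} (hxy : S.Adj x y)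
    (he' : s(x,y) ∉ S'.edgeSet) :
    ∃ a b, S'.Adj a b ∧ s(a,b) ∉ S.edgeSet ∧
      (S.deleteEdges {s(x,y)} ⊔ fromEdgeSet {s(a,b)}).IsTree ∧
      (S'.deleteEdges {s(a,b)} ⊔ fromEdgeSet {s(x,y)}).IsTree := by
  classical
  have he : s(x,y) ∈ S.edgeSet := hxy
  -- e is a bridge of S
  have hbr : S.IsBridge s(x,y) := isAcyclic_iff_forall_edge_isBridge.mp hS.2 he
  have hnr : ¬ (S.deleteEdges {s(x,y)}).Reachable x y := isBridge_iff.mp hbr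
  set P : W → Prop := fun v => (S.deleteEdges {s(x,y)}).Reachable x v with hP
  obtain ⟨p0⟩ := hS'.1.preconnected x y
  obtain ⟨a, b, hab, hPa, hPb, _hmem, hra, hrb⟩ :=
    exists_crossing_dart P p0.bypass (p0.bypass_isPath.1.edges_nodup)
      (Reachable.refl _) hnr
  have hfe : s(a,b) ≠ s(x,y) := by
    intro h
    have hm : s(a,b) ∈ S'.edgeSet := hab
    rw [h] at hm
    exact he' hm
  have hfS : s(a,b) ∉ S.edgeSet := by
    intro hf
    refine hPb (hPa.trans (Adj.reachable ?_))
    rw [deleteEdges_adj]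
    exact ⟨hf, by simpa using hfe⟩
  -- b is reachable to y in S minus e
  have hby : (S.deleteEdges {s(x,y)}).Reachable b y := by
    obtain ⟨pbx⟩ := hS.1.preconnected b x
    rcases reachable_deleteEdges_or x y pbx with h | h | h
    · exact absurd h.symm hPb
    · exact absurd h.symm hPb
    · exact h
  have hxane : x ≠ y := hxy.ne
  have habne : a ≠ b := hab.ne
  have hfdiag : ¬ (s(a,b)).IsDiag := by simp [habne]
  have hediag : ¬ (s(x,y)).IsDiag := by simp [hxane]
  -- ncard facts
  have hncS : S.edgeSet.ncard + 1 = Fintype.card W := IsTree.ncard_edgeSet' hS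
  have hncS' : S'.edgeSet.ncard + 1 = Fintype.card W := IsTree.ncard_edgeSet' hS'
  have hncard : ∀ (T : SimpleGraph W) (e f : Sym2 W), e ∈ T.edgeSet → f ∉ T.edgeSet →
      ¬ f.IsDiag → (T.deleteEdges {e} ⊔ fromEdgeSet {f}).edgeSet.ncard = T.edgeSet.ncard := by
    intro T e f heT hfT hfd
    rw [edgeSet_swap T e f hfd]
    rw [Set.ncard_insert_of_notMem (fun h => hfT h.1) ((Set.toFinite _).diff)]
    rw [Set.ncard_diff_singleton_of_mem heT]
    have : T.edgeSet.ncard ≠ 0 := by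
      intro h0
      rw [Set.ncard_eq_zero (Set.toFinite _)] at h0
      simp [h0] at heT
    omega
  refine ⟨a, b, hab, hfS, ?_, ?_⟩
  · -- S - e + f is a tree
    refine isTree_of_connected_of_ncard ?_ (by rw [hncard S _ _ he hfS hfdiag, hncS])
    refine connected_of_forall_adj_reachable hS.1 fun u v huv => ?_
    by_cases hne : s(u, v) = s(x, y)
    · have hreach : (S.deleteEdges {s(x,y)} ⊔ fromEdgeSet {s(a,b)}).Reachable x y := by
        have h1 : (S.deleteEdges {s(x,y)} ⊔ fromEdgeSet {s(a,b)}).Reachable x a :=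
          hPa.mono le_sup_left
        have h2 : (S.deleteEdges {s(x,y)} ⊔ fromEdgeSet {s(a,b)}).Adj a b := by
          rw [sup_adj, fromEdgeSet_adj]
          exact Or.inr ⟨rfl, habne⟩
        have h3 : (S.deleteEdges {s(x,y)} ⊔ fromEdgeSet {s(a,b)}).Reachable b y :=
          hby.mono le_sup_left
        exact (h1.trans h2.reachable).trans h3
      rw [Sym2.eq_iff] at hne
      rcases hne with ⟨rfl, rfl⟩ | ⟨rfl, rfl⟩
      · exact hreach
      · exact hreach.symm
    · refine Reachable.mono le_sup_left (Adj.reachable ?_)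
      rw [deleteEdges_adj]
      exact ⟨huv, by simpa using hne⟩
  · -- S' - f + e is a tree
    refine isTree_of_connected_of_ncard ?_ (by rw [hncard S' _ _ hab he' hediag, hncS'])
    refine connected_of_forall_adj_reachable hS'.1 fun u v huv => ?_
    by_cases hne : s(u, v) = s(a, b)
    · have hreach : (S'.deleteEdges {s(a,b)} ⊔ fromEdgeSet {s(x,y)}).Reachable a b := by
        have h1 : (S'.deleteEdges {s(a,b)} ⊔ fromEdgeSet {s(x,y)}).Reachable a x :=
          hra.symm.mono le_sup_left
        have h2 : (S'.deleteEdges {s(a,b)} ⊔ fromEdgeSet {s(x,y)}).Adj x y := by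
          rw [sup_adj, fromEdgeSet_adj]
          exact Or.inr ⟨rfl, hxane⟩
        have h3 : (S'.deleteEdges {s(a,b)} ⊔ fromEdgeSet {s(x,y)}).Reachable y b :=
          hrb.symm.mono le_sup_left
        exact (h1.trans h2.reachable).trans h3
      rw [Sym2.eq_iff] at hne
      rcases hne with ⟨rfl, rfl⟩ | ⟨rfl, rfl⟩
      · exact hreach
      · exact hreach.symm
    · refine Reachable.mono le_sup_left (Adj.reachable ?_)
      rw [deleteEdges_adj]
      exact ⟨huv, by simpa using hne⟩

private lemma spanningCoe_edgeSet {G : SimpleGraph V} (T : G.Subgraph) :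
    T.spanningCoe.edgeSet = T.edgeSet := by
  ext g
  induction g using Sym2.ind with
  | _ u v => exact Iff.rfl

private lemma weight_swap {W : Type*} [Fintype W] {G : SimpleGraph W}
    (w : Sym2 W → ℝ) {T : G.Subgraph} {T₂ : G.Subgraph} {e f : Sym2 W}
    (he : e ∈ T.edgeSet) (hf : f ∉ T.edgeSet) (hfe : f ≠ e)
    (h2 : T₂.edgeSet = insert f (T.edgeSet \ {e})) :
    subgraphWeight w T₂ = subgraphWeight w T - w e + w f := by
  classical
  have hfin : (Set.toFinite T₂.edgeSet).toFinset
      = insert f ((Set.toFinite T.edgeSet).toFinset.erase e) := by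
    ext g
    simp only [Set.Finite.mem_toFinset, h2, Set.mem_insert_iff, Set.mem_diff,
      Set.mem_singleton_iff, Finset.mem_insert, Finset.mem_erase]
    tauto
  rw [subgraphWeight, subgraphWeight, hfin, Finset.sum_insert (by
    simp only [Finset.mem_erase, Set.Finite.mem_toFinset]
    tauto)]
  rw [Finset.sum_erase_eq_sub (by simp only [Set.Finite.mem_toFinset]; exact he)]
  ring

private lemma mst_exchange {W : Type*} [Fintype W] {G : SimpleGraph W}
    (w : Sym2 W → ℝ) {T T' : G.Subgraph} (hT : IsMST w T) (hT' : IsMST w T')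
    {e : Sym2 W} (he : e ∈ T.edgeSet) (he' : e ∉ T'.edgeSet) :
    ∃ f ∈ T'.edgeSet, f ∉ T.edgeSet ∧ w f = w e := by
  classical
  induction e using Sym2.ind with
  | _ x y =>
  set S := T.spanningCoe with hSdef
  set S' := T'.spanningCoe with hS'def
  have hSe : S.edgeSet = T.edgeSet := spanningCoe_edgeSet T
  have hS'e : S'.edgeSet = T'.edgeSet := spanningCoe_edgeSet T'
  have hxy : S.Adj x y := by rw [← SimpleGraph.mem_edgeSet, hSe]; exact he
  obtain ⟨a, b, hab, hfS, htree2, htree3⟩ :=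
    swap_isTree hT.1.2 hT'.1.2 hxy (by rw [hS'e]; exact he')
  have hfT' : s(a,b) ∈ T'.edgeSet := by rw [← hS'e]; exact hab
  have hfT : s(a,b) ∉ T.edgeSet := by rw [← hSe]; exact hfS
  have hfG : s(a,b) ∈ G.edgeSet := T'.edgeSet_subset hfT'
  have heG : s(x,y) ∈ G.edgeSet := T.edgeSet_subset he
  have hfe : s(a,b) ≠ s(x,y) := fun h => hfT (h ▸ he)
  refine ⟨s(a,b), hfT', hfT, ?_⟩
  -- build the two swapped spanning trees as subgraphs of G
  have hle2 : S.deleteEdges {s(x,y)} ⊔ fromEdgeSet {s(a,b)} ≤ G := by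
    refine sup_le ((deleteEdges_le _).trans T.spanningCoe_le) ?_
    intro u v huv
    rw [fromEdgeSet_adj] at huv
    obtain ⟨hm, -⟩ := huv
    rw [Set.mem_singleton_iff] at hm
    rw [← SimpleGraph.mem_edgeSet, hm]
    exact hfG
  have hle3 : S'.deleteEdges {s(a,b)} ⊔ fromEdgeSet {s(x,y)} ≤ G := by
    refine sup_le ((deleteEdges_le _).trans T'.spanningCoe_le) ?_
    intro u v huv
    rw [fromEdgeSet_adj] at huv
    obtain ⟨hm, -⟩ := huv
    rw [Set.mem_singleton_iff] at hm
    rw [← SimpleGraph.mem_edgeSet, hm]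
    exact heG
  set T₂ : G.Subgraph := SimpleGraph.toSubgraph _ hle2 with hT₂def
  set T₃ : G.Subgraph := SimpleGraph.toSubgraph _ hle3 with hT₃def
  have hT₂coe : T₂.spanningCoe = S.deleteEdges {s(x,y)} ⊔ fromEdgeSet {s(a,b)} := rfl
  have hT₃coe : T₃.spanningCoe = S'.deleteEdges {s(a,b)} ⊔ fromEdgeSet {s(x,y)} := rfl
  have hT₂st : IsSpanningTree T₂ := ⟨SimpleGraph.toSubgraph.isSpanning _ hle2,
    by rw [hT₂coe]; exact htree2⟩
  have hT₃st : IsSpanningTree T₃ := ⟨SimpleGraph.toSubgraph.isSpanning _ hle3,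
    by rw [hT₃coe]; exact htree3⟩
  have hT₂e : T₂.edgeSet = insert s(a,b) (T.edgeSet \ {s(x,y)}) := by
    rw [← spanningCoe_edgeSet T₂, hT₂coe, edgeSet_swap _ _ _ (by simp [hab.ne]), hSe]
  have hT₃e : T₃.edgeSet = insert s(x,y) (T'.edgeSet \ {s(a,b)}) := by
    rw [← spanningCoe_edgeSet T₃, hT₃coe, edgeSet_swap _ _ _ (by simp [hxy.ne]), hS'e]
  have hw2 : subgraphWeight w T₂ = subgraphWeight w T - w s(x,y) + w s(a,b) :=
    weight_swap w he hfT hfe hT₂e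
  have hw3 : subgraphWeight w T₃ = subgraphWeight w T' - w s(a,b) + w s(x,y) :=
    weight_swap w hfT' he' (Ne.symm hfe) hT₃e
  have h1 := hT.2 T₂ hT₂st
  have h2 := hT'.2 T₃ hT₃st
  rw [hw2] at h1
  rw [hw3] at h2
  linarith

private lemma choose_le_factorial (n k : ℕ) : n.choose k ≤ n.factorial := by
  by_cases h : k ≤ n
  · calc n.choose k ≤ n.choose k * (k.factorial * (n - k).factorial) :=
        Nat.le_mul_of_pos_right _ (by positivity)
    _ = n.factorial := by rw [← mul_assoc]; exact Nat.choose_mul_factorial_mul_factorial h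
  · rw [Nat.choose_eq_zero_of_lt (lt_of_not_ge h)]
    exact Nat.zero_le _

end Helpers

/-- If exactly `q` edges of a connected weighted graph share a common weight `c`
and all other edge weights are pairwise distinct (and different from `c`),
then there are at most `q!` minimum spanning trees. -/
theorem card_mst_le_factorial_of_q_equal_weights
    {V : Type*} [Fintype V] (G : SimpleGraph V) (hG : G.Connected)
    (w : Sym2 V → ℝ) (c : ℝ) (q : ℕ)
    (hq : Nat.card {e : Sym2 V // e ∈ G.edgeSet ∧ w e = c} = q)
    (hw : ∀ e ∈ G.edgeSet, ∀ f ∈ G.edgeSet,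
      w e ≠ c → w f ≠ c → w e = w f → e = f) :
    Nat.card {T : G.Subgraph // IsMST w T} ≤ Nat.factorial q := by
  classical
  by_cases hne : Nonempty {T : G.Subgraph // IsMST w T}
  swap
  · haveI := not_nonempty_iff.mp hne
    rw [Nat.card_of_isEmpty]
    exact Nat.zero_le _
  obtain ⟨⟨T₀, hT₀⟩⟩ := hne
  have key : ∀ T T' : G.Subgraph, IsMST w T → IsMST w T' →
      ∀ e ∈ T.edgeSet, w e ≠ c → e ∈ T'.edgeSet := by
    intro T T' hT hT' e heT hwc
    by_contra he'
    obtain ⟨f, hfT', hfT, hwf⟩ := mst_exchange w hT hT' heT he'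
    have : e = f := hw e (T.edgeSet_subset heT) f (T'.edgeSet_subset hfT')
      hwc (by rw [hwf]; exact hwc) hwf.symm
    exact hfT (this ▸ heT)
  haveI : Finite (Sym2 V) := Finite.of_surjective (Function.uncurry Sym2.mk : V × V → Sym2 V)
    (Sym2.mk_surjective)
  haveI : Finite {e : Sym2 V // e ∈ G.edgeSet ∧ w e = c} := Subtype.finite
  letI : Fintype {e : Sym2 V // e ∈ G.edgeSet ∧ w e = c} := Fintype.ofFinite _
  let Φ : G.Subgraph → Finset {e : Sym2 V // e ∈ G.edgeSet ∧ w e = c} := fun T =>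
    (Set.toFinite {e : {e : Sym2 V // e ∈ G.edgeSet ∧ w e = c} | e.1 ∈ T.edgeSet}).toFinset
  have hΦcard : ∀ T : G.Subgraph, (Φ T).card = {g | g ∈ T.edgeSet ∧ w g = c}.ncard := by
    intro T
    have himg : Subtype.val '' {e : {e : Sym2 V // e ∈ G.edgeSet ∧ w e = c} | e.1 ∈ T.edgeSet}
        = {g | g ∈ T.edgeSet ∧ w g = c} := by
      ext g
      constructor
      · rintro ⟨⟨g', hg'⟩, hmem, rfl⟩
        exact ⟨hmem, hg'.2⟩
      · rintro ⟨hgT, hgc⟩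
        exact ⟨⟨g, T.edgeSet_subset hgT, hgc⟩, hgT, rfl⟩
    rw [← himg, Set.ncard_image_of_injective _ Subtype.val_injective]
    exact (Set.ncard_eq_toFinset_card _ (Set.toFinite _)).symm
  -- all MSTs have the same number of weight-c edges
  have hsame : ∀ T : G.Subgraph, IsMST w T → (Φ T).card = (Φ T₀).card := by
    intro T hT
    have hN : {g | g ∈ T.edgeSet ∧ w g ≠ c} = {g | g ∈ T₀.edgeSet ∧ w g ≠ c} := by
      ext g
      exact ⟨fun ⟨h1, h2⟩ => ⟨key T T₀ hT hT₀ g h1 h2, h2⟩,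
        fun ⟨h1, h2⟩ => ⟨key T₀ T hT₀ hT g h1 h2, h2⟩⟩
    have hpart : ∀ T' : G.Subgraph, T'.edgeSet.ncard
        = {g | g ∈ T'.edgeSet ∧ w g = c}.ncard + {g | g ∈ T'.edgeSet ∧ w g ≠ c}.ncard := by
      intro T'
      rw [← Set.ncard_union_eq ?_ (Set.toFinite _) (Set.toFinite _)]
      · congr 1
        ext g
        constructor
        · intro hg
          by_cases hgc : w g = c
          · exact Or.inl ⟨hg, hgc⟩
          · exact Or.inr ⟨hg, hgc⟩
        · rintro (⟨hg, -⟩ | ⟨hg, -⟩) <;> exact hg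
      · rw [Set.disjoint_left]
        rintro g ⟨-, h1⟩ ⟨-, h2⟩
        exact h2 h1
    have hV : T.edgeSet.ncard = T₀.edgeSet.ncard := by
      have h1 : T.edgeSet.ncard + 1 = Fintype.card V := by
        rw [← spanningCoe_edgeSet T]
        exact IsTree.ncard_edgeSet' hT.1.2
      have h2 : T₀.edgeSet.ncard + 1 = Fintype.card V := by
        rw [← spanningCoe_edgeSet T₀]
        exact IsTree.ncard_edgeSet' hT₀.1.2
      omega
    have e1 := hpart T
    have e2 := hpart T₀
    rw [hΦcard T, hΦcard T₀]
    rw [hN] at e1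
    omega
  -- injectivity
  have hinj : ∀ T T' : G.Subgraph, IsMST w T → IsMST w T' → Φ T = Φ T' → T = T' := by
    intro T T' hT hT' hΦ
    have hedge : T.edgeSet = T'.edgeSet := by
      have hmemiff : ∀ g, g ∈ G.edgeSet ∧ w g = c → (g ∈ T.edgeSet ↔ g ∈ T'.edgeSet) := by
        intro g hg
        have := Finset.ext_iff.mp hΦ ⟨g, hg⟩
        simpa [Φ, Set.Finite.mem_toFinset] using this
      ext g
      constructor
      · intro hgT
        by_cases hgc : w g = c
        · exact (hmemiff g ⟨T.edgeSet_subset hgT, hgc⟩).mp hgT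
        · exact key T T' hT hT' g hgT hgc
      · intro hgT'
        by_cases hgc : w g = c
        · exact (hmemiff g ⟨T'.edgeSet_subset hgT', hgc⟩).mpr hgT'
        · exact key T' T hT' hT g hgT' hgc
    refine SimpleGraph.Subgraph.ext ?_ ?_
    · rw [hT.1.1.verts_eq_univ, hT'.1.1.verts_eq_univ]
    · ext u v
      rw [← SimpleGraph.Subgraph.mem_edgeSet, ← SimpleGraph.Subgraph.mem_edgeSet, hedge]
  -- count
  have hle : Nat.card {T : G.Subgraph // IsMST w T}
      ≤ Nat.card {s : Finset {e : Sym2 V // e ∈ G.edgeSet ∧ w e = c} // s.card = (Φ T₀).card} := by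
    apply Nat.card_le_card_of_injective
      (fun T : {T : G.Subgraph // IsMST w T} => (⟨Φ T.1, hsame T.1 T.2⟩ : _))
    intro T T' h
    exact Subtype.ext (hinj _ _ T.2 T'.2 (congrArg Subtype.val h))
  refine hle.trans ?_
  rw [Nat.card_eq_fintype_card, Fintype.card_finset_len, ← hq, Nat.card_eq_fintype_card]
  exact choose_le_factorial _ _
end
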